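/- Gauss summation theorem: if a, b, c are real numbers with c > 0 and c − a − b > 0, then the hypergeometric series Σ_{k≥0} ((a)_k (b)_k)/((c)_k k!) converges and its sum satisfies F(a,b;c;1) = Γ(c)Γ(c−a−b)/(Γ(c−a)Γ(c−b)), where Γ is the Gamma function. -/

import Mathlib

open Filter Topology
set_option maxHeartbeats 1000000

noncomputable def T (a b c : ℝ) (k : ℕ) : ℝ :=
  ((ascPochhammer ℝ k).eval a * (ascPochhammer ℝ k).eval b) /
    ((ascPochhammer ℝ k).eval c * (Nat.factorial k : ℝ))

lemma T_zero (a b c : ℝ) : T a b c 0 = 1 := by simp [T]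

lemma T_succ (a b c : ℝ) (hc : 0 < c) (k : ℕ) :
    T a b c (k+1) = T a b c k * ((a+k)*(b+k)/((c+k)*(k+1))) := by
  have h1 : (0:ℝ) < (ascPochhammer ℝ k).eval c := ascPochhammer_pos k c hc
  have h2 : (0:ℝ) < (k.factorial : ℝ) := by positivity
  have h3 : (0:ℝ) < c + k := by positivity
  simp only [T, ascPochhammer_succ_eval, Nat.factorial_succ]
  push_cast
  field_simp

lemma ratio_rpow (s : ℝ) (hs : 0 ≤ s) (p : ℝ) (hp : 1 ≤ p) :
    1 - s / p ≤ (p / (p+1)) ^ s := by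
  have hp0 : (0:ℝ) < p := by linarith
  have hp1 : (0:ℝ) < p / (p+1) := by positivity
  rw [Real.rpow_def_of_pos hp1]
  have hlog : Real.log ((p+1)/p) ≤ 1/p := by
    have h1 : Real.log ((p+1)/p) ≤ (p+1)/p - 1 :=
      Real.log_le_sub_one_of_pos (by positivity)
    have h2 : (p+1)/p - 1 = 1/p := by field_simp; ring
    linarith [h2 ▸ h1]
  have hlog2 : -(1/p) ≤ Real.log (p/(p+1)) := by
    have h3 : p/(p+1) = ((p+1)/p)⁻¹ := by field_simp
    rw [h3, Real.log_inv]
    linarith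
  calc 1 - s/p = 1 + s * (-(1/p)) := by ring
    _ ≤ 1 + Real.log (p/(p+1)) * s := by nlinarith
    _ ≤ Real.exp (Real.log (p/(p+1)) * s) := by
        linarith [Real.add_one_le_exp (Real.log (p/(p+1)) * s)]

lemma decay (f : ℕ → ℝ) (s : ℝ) (J : ℕ) (hs : 0 ≤ s) (hsJ : s ≤ J + 1)
    (hf : ∀ k, J ≤ k → |f (k+1)| ≤ (1 - s/(k+1)) * |f k|) :
    ∀ k, J ≤ k → |f k| ≤ |f J| * (((J:ℝ)+1)/((k:ℝ)+1)) ^ s := by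
  intro k hk
  induction k, hk using Nat.le_induction with
  | base =>
    have : (((J:ℝ)+1)/((J:ℝ)+1)) ^ s = 1 := by
      rw [div_self (by positivity), Real.one_rpow]
    rw [this, mul_one]
  | succ k hk ih =>
    have hk1 : (1:ℝ) ≤ (k:ℝ)+1 := by
      have : (0:ℝ) ≤ (k:ℝ) := Nat.cast_nonneg k; linarith
    have hJk : (J:ℝ) ≤ (k:ℝ) := Nat.cast_le.mpr hk
    have hfac : 0 ≤ 1 - s/((k:ℝ)+1) := by
      rw [sub_nonneg, div_le_one (by positivity)]
      linarith
    have hcast : ((k+1 : ℕ) : ℝ) + 1 = ((k:ℝ)+1) + 1 := by push_cast; ring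
    rw [hcast]
    calc |f (k+1)| ≤ (1 - s/((k:ℝ)+1)) * |f k| := hf k hk
      _ ≤ (1 - s/((k:ℝ)+1)) * (|f J| * (((J:ℝ)+1)/((k:ℝ)+1)) ^ s) :=
          mul_le_mul_of_nonneg_left ih hfac
      _ ≤ (((k:ℝ)+1)/(((k:ℝ)+1)+1)) ^ s * (|f J| * (((J:ℝ)+1)/((k:ℝ)+1)) ^ s) := by
          refine mul_le_mul_of_nonneg_right ?_ (by positivity)
          have := ratio_rpow s hs ((k:ℝ)+1) hk1
          linarith [this]
      _ = |f J| * ((((J:ℝ)+1)/((k:ℝ)+1)) ^ s * ((((k:ℝ)+1)/(((k:ℝ)+1)+1))) ^ s) := by ring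
      _ = |f J| * (((J:ℝ)+1)/(((k:ℝ)+1)+1)) ^ s := by
          rw [← Real.mul_rpow (by positivity) (by positivity)]
          congr 2
          field_simp

lemma summable_aux (s : ℝ) (hs : 1 < s) : Summable (fun k : ℕ => (((k:ℝ)+1) ^ s)⁻¹) := by
  have h := (Real.summable_nat_rpow_inv (p := s)).mpr hs
  have h2 := (summable_nat_add_iff 1).mpr h
  refine h2.congr fun n => ?_
  push_cast
  ring_nf

lemma tendsto_aux (s : ℝ) (hs : 0 < s) (C : ℝ) :
    Tendsto (fun k : ℕ => C * (((k:ℝ)+1) ^ s)⁻¹) atTop (𝓝 0) := by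
  have h1 : Tendsto (fun k : ℕ => ((k:ℝ)+1) ^ s) atTop atTop :=
    (tendsto_rpow_atTop hs).comp
      (tendsto_atTop_add_const_right atTop 1 tendsto_natCast_atTop_atTop)
  simpa using (h1.inv_tendsto_atTop).const_mul C

lemma summable_T (a b c : ℝ) (hc : 0 < c) (h : 0 < c - a - b) : Summable (T a b c) := by
  obtain ⟨ε, hε0, hε1, hε2⟩ : ∃ ε : ℝ, 0 < ε ∧ ε ≤ 1 ∧ ε ≤ (c-a-b)/2 :=
    ⟨min ((c-a-b)/2) 1, lt_min (by linarith) one_pos, min_le_right _ _, min_le_left _ _⟩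
  have hq : (0:ℝ) ≤ (c*ε + |a*b|)/ε :=
    div_nonneg (add_nonneg (by nlinarith) (abs_nonneg _)) hε0.le
  obtain ⟨J, hJ⟩ : ∃ J : ℕ, |a| + |b| + 1 + (c*ε + |a*b|)/ε ≤ (J:ℝ) :=
    exists_nat_ge _
  have hJa : |a| ≤ (J:ℝ) := by linarith [abs_nonneg a, abs_nonneg b]
  have hJb : |b| ≤ (J:ℝ) := by linarith [abs_nonneg a, abs_nonneg b]
  have hJ1 : (1:ℝ) ≤ (J:ℝ) := by linarith [abs_nonneg a, abs_nonneg b]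
  have hJε : (c*ε + |a*b|)/ε ≤ (J:ℝ) := by linarith [abs_nonneg a, abs_nonneg b]
  have hsJ : 1 + ε ≤ (J:ℝ) + 1 := by linarith
  have hrat : ∀ k, J ≤ k → |T a b c (k+1)| ≤ (1 - (1+ε)/(k+1)) * |T a b c k| := by
    intro k hk
    have hkR : (J:ℝ) ≤ (k:ℝ) := Nat.cast_le.mpr hk
    have ha : 0 ≤ a + k := by linarith [neg_abs_le a]
    have hb : 0 ≤ b + k := by linarith [neg_abs_le b]
    have hck : (0:ℝ) < c + k := by positivity
    have hk1 : (0:ℝ) < (k:ℝ) + 1 := by positivity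
    have hεk : c*ε + |a*b| ≤ ε * k := by
      rw [div_le_iff₀ hε0] at hJε
      nlinarith
    rw [T_succ a b c hc k, abs_mul,
      abs_of_nonneg (div_nonneg (mul_nonneg ha hb) (by positivity)), mul_comm]
    refine mul_le_mul_of_nonneg_right ?_ (abs_nonneg _)
    rw [div_le_iff₀ (by positivity)]
    have hexp : (1 - (1+ε)/((k:ℝ)+1)) * ((c+k)*((k:ℝ)+1)) = (c+k)*((k:ℝ)+1-(1+ε)) := by
      field_simp
    rw [hexp]
    have hab : a*b ≤ |a*b| := le_abs_self _
    nlinarith [mul_nonneg (sub_nonneg.mpr hεk) (Nat.cast_nonneg (α := ℝ) k)]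
  have hbound := decay (T a b c) (1+ε) J (by linarith) hsJ hrat
  have hS : Summable (fun k : ℕ => T a b c (k + J)) := by
    rw [← summable_abs_iff]
    refine Summable.of_nonneg_of_le (fun k => abs_nonneg _) ?_
      (((summable_aux (1+ε) (by linarith)).mul_left (|T a b c J| * ((J:ℝ)+1) ^ (1+ε))))
    · intro k
      have h1 := hbound (k + J) (Nat.le_add_left J k)
      have h2 : (((J:ℝ)+1)/((↑(k+J):ℝ)+1)) ^ (1+ε) ≤ (((J:ℝ)+1)/((k:ℝ)+1)) ^ (1+ε) := by
        refine Real.rpow_le_rpow (by positivity) ?_ (by linarith)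
        refine div_le_div_of_nonneg_left (by positivity) (by positivity) ?_
        push_cast
        linarith [Nat.cast_nonneg (α := ℝ) J]
      calc |T a b c (k+J)| ≤ |T a b c J| * (((J:ℝ)+1)/((↑(k+J):ℝ)+1)) ^ (1+ε) := h1
        _ ≤ |T a b c J| * (((J:ℝ)+1)/((k:ℝ)+1)) ^ (1+ε) :=
            mul_le_mul_of_nonneg_left h2 (abs_nonneg _)
        _ = (|T a b c J| * ((J:ℝ)+1) ^ (1+ε)) * (((k:ℝ)+1) ^ (1+ε))⁻¹ := by
            rw [Real.div_rpow (by positivity) (by positivity)]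
            ring
  exact (summable_nat_add_iff J).mp hS

lemma tendsto_weight (a b c : ℝ) (hc : 0 < c) (h : 0 < c - a - b) :
    Tendsto (fun n : ℕ => (n:ℝ) * (c+(n:ℝ)) * T a b (c+1) n) atTop (𝓝 0) := by
  set f : ℕ → ℝ := fun n => (n:ℝ) * (c+(n:ℝ)) * T a b (c+1) n with hfdef
  obtain ⟨σ, hσ0, hσ1, hσ2⟩ : ∃ σ : ℝ, 0 < σ ∧ σ ≤ 1/2 ∧ σ ≤ (c-a-b)/2 :=
    ⟨min ((c-a-b)/2) (1/2), lt_min (by linarith) (by norm_num), min_le_right _ _,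
      min_le_left _ _⟩
  have hE : (0:ℝ) ≤ (|c*(1-σ)-a-b-a*b| + |a*b|)/σ :=
    div_nonneg (add_nonneg (abs_nonneg _) (abs_nonneg _)) hσ0.le
  obtain ⟨J, hJ⟩ : ∃ J : ℕ,
      |a| + |b| + 1 + (|c*(1-σ)-a-b-a*b| + |a*b|)/σ ≤ (J:ℝ) := exists_nat_ge _
  have hJa : |a| ≤ (J:ℝ) := by linarith [abs_nonneg a, abs_nonneg b]
  have hJb : |b| ≤ (J:ℝ) := by linarith [abs_nonneg a, abs_nonneg b]
  have hJ1 : (1:ℝ) ≤ (J:ℝ) := by linarith [abs_nonneg a, abs_nonneg b]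
  have hJE : (|c*(1-σ)-a-b-a*b| + |a*b|)/σ ≤ (J:ℝ) := by
    linarith [abs_nonneg a, abs_nonneg b]
  have hrat : ∀ k, J ≤ k → |f (k+1)| ≤ (1 - σ/(k+1)) * |f k| := by
    intro k hk
    have hkR : (J:ℝ) ≤ (k:ℝ) := Nat.cast_le.mpr hk
    have ha : 0 ≤ a + k := by linarith [neg_abs_le a]
    have hb : 0 ≤ b + k := by linarith [neg_abs_le b]
    have hck : (0:ℝ) < c + k := by positivity
    have hk1 : (0:ℝ) < (k:ℝ) + 1 := by positivity
    have hσk : |c*(1-σ)-a-b-a*b| + |a*b| ≤ σ * k := by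
      rw [div_le_iff₀ hσ0] at hJE
      nlinarith
    have hf1 : f (k+1) = T a b (c+1) k * ((a+k)*(b+k)) := by
      simp only [hfdef]
      rw [T_succ a b (c+1) (by linarith) k]
      push_cast
      have hck1 : c + 1 + (k:ℝ) ≠ 0 := by positivity
      field_simp
      ring
    rw [hf1, abs_mul, abs_of_nonneg (mul_nonneg ha hb), mul_comm]
    have hf0 : |f k| = (k:ℝ) * (c+(k:ℝ)) * |T a b (c+1) k| := by
      simp only [hfdef, abs_mul]
      rw [abs_of_nonneg (Nat.cast_nonneg k), abs_of_nonneg hck.le]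
    rw [hf0]
    rw [show (1 - σ/((k:ℝ)+1)) * ((k:ℝ) * (c+(k:ℝ)) * |T a b (c+1) k|)
      = ((1 - σ/((k:ℝ)+1)) * ((k:ℝ) * (c+(k:ℝ)))) * |T a b (c+1) k| by ring]
    rw [show (a+(k:ℝ))*(b+(k:ℝ)) * |T a b (c+1) k|
      = |T a b (c+1) k| * ((a+(k:ℝ))*(b+(k:ℝ))) by ring,
      show ((1 - σ/((k:ℝ)+1)) * ((k:ℝ) * (c+(k:ℝ)))) * |T a b (c+1) k|
      = |T a b (c+1) k| * ((1 - σ/((k:ℝ)+1)) * ((k:ℝ) * (c+(k:ℝ)))) by ring]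
    refine mul_le_mul_of_nonneg_left ?_ (abs_nonneg _)
    rw [← sub_nonneg]
    have hexp : (1 - σ/((k:ℝ)+1)) * ((k:ℝ) * (c+(k:ℝ))) - (a+(k:ℝ))*(b+(k:ℝ))
        = ((c-a-b-σ)*(k:ℝ)^2 + (c*(1-σ)-a-b-a*b)*(k:ℝ) - a*b) / ((k:ℝ)+1) := by
      field_simp
      ring
    rw [hexp]
    refine div_nonneg ?_ hk1.le
    have key : (|c*(1-σ)-a-b-a*b| + |a*b|) * k ≤ (c-a-b-σ) * (k:ℝ)^2 := by
      nlinarith [mul_le_mul_of_nonneg_right hσk (Nat.cast_nonneg (α := ℝ) k)]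
    have hk1' : (1:ℝ) ≤ (k:ℝ) := le_trans hJ1 hkR
    nlinarith [mul_le_mul_of_nonneg_right (neg_abs_le (c*(1-σ)-a-b-a*b))
        (Nat.cast_nonneg (α := ℝ) k),
      mul_nonneg (abs_nonneg (a*b)) (by linarith : (0:ℝ) ≤ (k:ℝ) - 1),
      le_abs_self (a*b)]
  have hbound := decay f σ J hσ0.le (by linarith) hrat
  refine squeeze_zero_norm' ?_ (tendsto_aux σ hσ0 (|f J| * ((J:ℝ)+1) ^ σ))
  filter_upwards [eventually_ge_atTop J] with n hn
  rw [Real.norm_eq_abs]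
  calc |f n| ≤ |f J| * (((J:ℝ)+1)/((n:ℝ)+1)) ^ σ := hbound n hn
    _ = |f J| * ((J:ℝ)+1) ^ σ * (((n:ℝ)+1) ^ σ)⁻¹ := by
        rw [Real.div_rpow (by positivity) (by positivity)]
        ring

lemma poch_succ_left (c : ℝ) (k : ℕ) :
    (ascPochhammer ℝ (k+1)).eval c = c * (ascPochhammer ℝ k).eval (c+1) := by
  rw [ascPochhammer_succ_left, Polynomial.eval_mul, Polynomial.eval_X,
    Polynomial.eval_comp, Polynomial.eval_add, Polynomial.eval_X, Polynomial.eval_one]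

lemma term_id (a b c : ℝ) (hc : 0 < c) (k : ℕ) :
    c*(c-a-b) * T a b c k - (c-a)*(c-b) * T a b (c+1) k
      = (k:ℝ)*(c+(k:ℝ))*T a b (c+1) k - ((k:ℝ)+1)*(c+((k:ℝ)+1)) * T a b (c+1) (k+1) := by
  have hQ : (0:ℝ) < (ascPochhammer ℝ k).eval (c+1) := ascPochhammer_pos k _ (by linarith)
  have hF : (0:ℝ) < (k.factorial : ℝ) := by positivity
  have hck : (0:ℝ) < c + k := by positivity
  have hP : (ascPochhammer ℝ k).eval c
      = c * (ascPochhammer ℝ k).eval (c+1) / (c + k) := by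
    have h1 : (ascPochhammer ℝ k).eval c * (c + k) = c * (ascPochhammer ℝ k).eval (c+1) := by
      rw [← poch_succ_left c k, ascPochhammer_succ_eval]
    field_simp
    linarith [h1]
  simp only [T, ascPochhammer_succ_eval, Nat.factorial_succ, hP]
  push_cast
  have h1 : c + 1 + (k:ℝ) ≠ 0 := by positivity
  field_simp
  ring

lemma partial_id (a b c : ℝ) (hc : 0 < c) (n : ℕ) :
    c*(c-a-b) * (∑ k ∈ Finset.range n, T a b c k)
      - (c-a)*(c-b) * (∑ k ∈ Finset.range n, T a b (c+1) k)
    = -((n:ℝ)*(c+(n:ℝ)) * T a b (c+1) n) := by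
  calc c*(c-a-b) * (∑ k ∈ Finset.range n, T a b c k)
      - (c-a)*(c-b) * (∑ k ∈ Finset.range n, T a b (c+1) k)
      = ∑ k ∈ Finset.range n,
          (c*(c-a-b) * T a b c k - (c-a)*(c-b) * T a b (c+1) k) := by
        rw [Finset.sum_sub_distrib, ← Finset.mul_sum, ← Finset.mul_sum]
    _ = ∑ k ∈ Finset.range n,
          ((fun m : ℕ => (m:ℝ)*(c+(m:ℝ))*T a b (c+1) m) k
            - (fun m : ℕ => (m:ℝ)*(c+(m:ℝ))*T a b (c+1) m) (k+1)) := by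
        refine Finset.sum_congr rfl fun k _ => ?_
        rw [term_id a b c hc k]
        push_cast
        ring_nf
    _ = (fun m : ℕ => (m:ℝ)*(c+(m:ℝ))*T a b (c+1) m) 0
          - (fun m : ℕ => (m:ℝ)*(c+(m:ℝ))*T a b (c+1) m) n :=
        Finset.sum_range_sub' _ n
    _ = -((n:ℝ)*(c+(n:ℝ)) * T a b (c+1) n) := by simp

lemma gauss_step (a b c : ℝ) (hc : 0 < c) (h : 0 < c - a - b) :
    c*(c-a-b) * ∑' k, T a b c k = (c-a)*(c-b) * ∑' k, T a b (c+1) k := by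
  have S1 := summable_T a b c hc h
  have S2 := summable_T a b (c+1) (by linarith) (by linarith)
  have t1 : Tendsto (fun n : ℕ => c*(c-a-b) * (∑ k ∈ Finset.range n, T a b c k)
      - (c-a)*(c-b) * (∑ k ∈ Finset.range n, T a b (c+1) k)) atTop
      (𝓝 (c*(c-a-b) * ∑' k, T a b c k - (c-a)*(c-b) * ∑' k, T a b (c+1) k)) :=
    (S1.hasSum.tendsto_sum_nat.const_mul _).sub (S2.hasSum.tendsto_sum_nat.const_mul _)
  have t1' := t1.congr (fun n => partial_id a b c hc n)
  have t2 : Tendsto (fun n : ℕ => -((n:ℝ)*(c+(n:ℝ)) * T a b (c+1) n)) atTop (𝓝 0) := by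
    simpa using (tendsto_weight a b c hc h).neg
  have := tendsto_nhds_unique t1' t2
  linarith [this]

lemma iterate_step (a b c : ℝ) (hc : 0 < c) (h : 0 < c - a - b) (n : ℕ) :
    ∑' k, T a b c k
      = (∏ j ∈ Finset.range n, ((c+j-a)*(c+j-b))/((c+j)*(c+j-a-b)))
        * ∑' k, T a b (c+(n:ℝ)) k := by
  induction n with
  | zero => simp
  | succ n ih =>
    have hcn : (0:ℝ) < c + n := by positivity
    have hcnab : (0:ℝ) < c + n - a - b := by linarith
    have step := gauss_step a b (c+(n:ℝ)) hcn (by linarith)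
    have hne : (c+(n:ℝ))*((c+(n:ℝ))-a-b) ≠ 0 := by positivity
    have hF : ∑' k, T a b (c+(n:ℝ)) k
        = ((c+(n:ℝ)-a)*(c+(n:ℝ)-b))/((c+(n:ℝ))*(c+(n:ℝ)-a-b))
          * ∑' k, T a b (c+(n:ℝ)+1) k := by
      rw [div_mul_eq_mul_div, eq_div_iff hne]
      calc (∑' k, T a b (c+(n:ℝ)) k) * ((c+(n:ℝ))*(c+(n:ℝ)-a-b))
          = (c+(n:ℝ))*((c+(n:ℝ))-a-b) * ∑' k, T a b (c+(n:ℝ)) k := by ring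
        _ = ((c+(n:ℝ))-a)*((c+(n:ℝ))-b) * ∑' k, T a b ((c+(n:ℝ))+1) k := step
        _ = (c+(n:ℝ)-a)*(c+(n:ℝ)-b) * ∑' k, T a b (c+(n:ℝ)+1) k := by ring_nf
    rw [ih, hF, Finset.prod_range_succ]
    have : c + ((n:ℝ)+1) = c + (n:ℝ) + 1 := by ring
    push_cast
    rw [this]
    ring

lemma poch_abs_le (x : ℝ) (k : ℕ) :
    |(ascPochhammer ℝ k).eval x| ≤ (ascPochhammer ℝ k).eval |x| := by
  induction k with
  | zero => simp
  | succ k ih =>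
    rw [ascPochhammer_succ_eval, ascPochhammer_succ_eval, abs_mul]
    refine mul_le_mul ih ?_ (abs_nonneg _) ?_
    · calc |x + (k:ℝ)| ≤ |x| + |(k:ℝ)| := abs_add_le _ _
        _ = |x| + (k:ℝ) := by rw [abs_of_nonneg (Nat.cast_nonneg (α := ℝ) k)]
    · exact le_trans (abs_nonneg _) ih

lemma poch_mono (x y : ℝ) (hx : 0 < x) (hxy : x ≤ y) (k : ℕ) :
    (ascPochhammer ℝ k).eval x ≤ (ascPochhammer ℝ k).eval y := by
  induction k with
  | zero => simp
  | succ k ih =>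
    rw [ascPochhammer_succ_eval, ascPochhammer_succ_eval]
    have h1 : (0:ℝ) < (ascPochhammer ℝ k).eval x := ascPochhammer_pos k x hx
    have h2 : (0:ℝ) ≤ x + k := by positivity
    refine mul_le_mul ih (by linarith) h2 ?_
    exact le_trans h1.le ih

lemma poch_lower (c : ℝ) (hc : 0 < c) (y : ℝ) (hy : c ≤ y) (k : ℕ) :
    (y/c) * (ascPochhammer ℝ (k+1)).eval c ≤ (ascPochhammer ℝ (k+1)).eval y := by
  rw [poch_succ_left, poch_succ_left]
  have h1 : (ascPochhammer ℝ k).eval (c+1) ≤ (ascPochhammer ℝ k).eval (y+1) :=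
    poch_mono (c+1) (y+1) (by linarith) (by linarith) k
  have h2 : (0:ℝ) < (ascPochhammer ℝ k).eval (c+1) := ascPochhammer_pos k _ (by linarith)
  have hy0 : (0:ℝ) < y := lt_of_lt_of_le hc hy
  have heq : (y/c) * (c * (ascPochhammer ℝ k).eval (c+1)) = y * (ascPochhammer ℝ k).eval (c+1) := by
    field_simp
  rw [heq]
  exact mul_le_mul_of_nonneg_left h1 hy0.le

lemma T_tail_bound (a b c : ℝ) (hc : 0 < c) (m n : ℕ) (hmn : m ≤ n) (k : ℕ) :
    |T a b (c+(n:ℝ)) (k+1)| ≤ ((c+m)/(c+n)) * T |a| |b| (c+(m:ℝ)) (k+1) := by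
  have hcm : (0:ℝ) < c + m := by positivity
  have hcn : (0:ℝ) < c + n := by positivity
  have hmn' : c + (m:ℝ) ≤ c + n := by
    have : (m:ℝ) ≤ n := Nat.cast_le.mpr hmn
    linarith
  have hPn : (0:ℝ) < (ascPochhammer ℝ (k+1)).eval (c+(n:ℝ)) := ascPochhammer_pos _ _ hcn
  have hPm : (0:ℝ) < (ascPochhammer ℝ (k+1)).eval (c+(m:ℝ)) := ascPochhammer_pos _ _ hcm
  have hF : (0:ℝ) < ((k+1).factorial : ℝ) := by positivity
  have hA : |(ascPochhammer ℝ (k+1)).eval a| ≤ (ascPochhammer ℝ (k+1)).eval |a| :=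
    poch_abs_le a (k+1)
  have hB : |(ascPochhammer ℝ (k+1)).eval b| ≤ (ascPochhammer ℝ (k+1)).eval |b| :=
    poch_abs_le b (k+1)
  have hA0 : (0:ℝ) ≤ (ascPochhammer ℝ (k+1)).eval |a| := le_trans (abs_nonneg _) hA
  have hB0 : (0:ℝ) ≤ (ascPochhammer ℝ (k+1)).eval |b| := le_trans (abs_nonneg _) hB
  have hlow : ((c+(n:ℝ))/(c+(m:ℝ))) * (ascPochhammer ℝ (k+1)).eval (c+(m:ℝ))
      ≤ (ascPochhammer ℝ (k+1)).eval (c+(n:ℝ)) := poch_lower _ hcm _ hmn' k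
  have hlow0 : (0:ℝ) < ((c+(n:ℝ))/(c+(m:ℝ))) * (ascPochhammer ℝ (k+1)).eval (c+(m:ℝ)) := by
    positivity
  unfold T
  rw [abs_div, abs_mul, abs_mul,
    abs_of_pos hPn, abs_of_nonneg (le_of_lt hF)]
  calc |(ascPochhammer ℝ (k+1)).eval a| * |(ascPochhammer ℝ (k+1)).eval b|
        / ((ascPochhammer ℝ (k+1)).eval (c+(n:ℝ)) * ((k+1).factorial : ℝ))
      ≤ (ascPochhammer ℝ (k+1)).eval |a| * (ascPochhammer ℝ (k+1)).eval |b|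
        / ((ascPochhammer ℝ (k+1)).eval (c+(n:ℝ)) * ((k+1).factorial : ℝ)) := by
        refine div_le_div_of_nonneg_right ?_ (by positivity) |>.trans_eq rfl
        exact mul_le_mul hA hB (abs_nonneg _) hA0
    _ ≤ (ascPochhammer ℝ (k+1)).eval |a| * (ascPochhammer ℝ (k+1)).eval |b|
        / (((c+(n:ℝ))/(c+(m:ℝ))) * (ascPochhammer ℝ (k+1)).eval (c+(m:ℝ)) * ((k+1).factorial : ℝ)) := by
        refine div_le_div_of_nonneg_left (by positivity) (by positivity) ?_
        exact mul_le_mul_of_nonneg_right hlow hF.le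
    _ = ((c+m)/(c+n)) * ((ascPochhammer ℝ (k+1)).eval |a| * (ascPochhammer ℝ (k+1)).eval |b|
        / ((ascPochhammer ℝ (k+1)).eval (c+(m:ℝ)) * ((k+1).factorial : ℝ))) := by
        field_simp

lemma tendsto_F_one (a b c : ℝ) (hc : 0 < c) (h : 0 < c - a - b) :
    Tendsto (fun n : ℕ => ∑' k, T a b (c+(n:ℝ)) k) atTop (𝓝 1) := by
  obtain ⟨m, hm⟩ : ∃ m : ℕ, |a| + |b| ≤ (m:ℝ) := exists_nat_ge _
  have hcm : (0:ℝ) < c + m := by positivity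
  have hSm : Summable (T |a| |b| (c+(m:ℝ))) :=
    summable_T _ _ _ hcm (by linarith [abs_nonneg a, abs_nonneg b])
  have hSm1 : Summable (fun k => T |a| |b| (c+(m:ℝ)) (k+1)) :=
    (summable_nat_add_iff 1).mpr hSm
  set M := ∑' k, T |a| |b| (c+(m:ℝ)) (k+1) with hM
  have key : ∀ n : ℕ, m ≤ n →
      ‖(∑' k, T a b (c+(n:ℝ)) k) - 1‖ ≤ ((c+m) * M) * (c+(n:ℝ))⁻¹ := by
    intro n hn
    have hcn : (0:ℝ) < c + n := by positivity
    have hnab : (0:ℝ) < c + n - a - b := by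
      have : (0:ℝ) ≤ (n:ℝ) := Nat.cast_nonneg n
      linarith
    have hSn : Summable (T a b (c+(n:ℝ))) := summable_T _ _ _ hcn (by linarith)
    have hSn1 : Summable (fun k => T a b (c+(n:ℝ)) (k+1)) :=
      (summable_nat_add_iff 1).mpr hSn
    have habs : ∀ k, |T a b (c+(n:ℝ)) (k+1)| ≤ ((c+m)/(c+n)) * T |a| |b| (c+(m:ℝ)) (k+1) :=
      T_tail_bound a b c hc m n hn
    have hSabs : Summable (fun k => |T a b (c+(n:ℝ)) (k+1)|) :=
      Summable.of_nonneg_of_le (fun k => abs_nonneg _) habs (hSm1.mul_left _)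
    have hsplit : ∑' k, T a b (c+(n:ℝ)) k = 1 + ∑' k, T a b (c+(n:ℝ)) (k+1) := by
      rw [Summable.tsum_eq_zero_add hSn, T_zero]
    rw [hsplit]
    have : (1 + ∑' k, T a b (c+(n:ℝ)) (k+1)) - 1 = ∑' k, T a b (c+(n:ℝ)) (k+1) := by ring
    rw [this]
    calc ‖∑' k, T a b (c+(n:ℝ)) (k+1)‖ ≤ ∑' k, ‖T a b (c+(n:ℝ)) (k+1)‖ :=
          norm_tsum_le_tsum_norm (by simpa [Real.norm_eq_abs] using hSabs)
      _ ≤ ∑' k, ((c+m)/(c+n)) * T |a| |b| (c+(m:ℝ)) (k+1) := by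
          refine Summable.tsum_le_tsum ?_ (by simpa [Real.norm_eq_abs] using hSabs) (hSm1.mul_left _)
          intro k
          simpa [Real.norm_eq_abs] using habs k
      _ = ((c+m)/(c+n)) * M := tsum_mul_left
      _ = ((c+m) * M) * (c+(n:ℝ))⁻¹ := by field_simp
  have t0 : Tendsto (fun n : ℕ => ((c+m) * M) * (c+(n:ℝ))⁻¹) atTop (𝓝 0) := by
    have h1 : Tendsto (fun n : ℕ => c+(n:ℝ)) atTop atTop :=
      tendsto_atTop_add_const_left atTop c tendsto_natCast_atTop_atTop
    simpa using (h1.inv_tendsto_atTop).const_mul ((c+m)*M)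
  have hdiff : Tendsto (fun n : ℕ => (∑' k, T a b (c+(n:ℝ)) k) - 1) atTop (𝓝 0) := by
    refine squeeze_zero_norm' ?_ t0
    filter_upwards [eventually_ge_atTop m] with n hn using key n hn
  have := hdiff.add_const 1
  simpa using this

lemma prod_tendsto (a b c : ℝ) (hc : 0 < c) (h : 0 < c - a - b) :
    Tendsto (fun n : ℕ => ∏ j ∈ Finset.range n,
        ((c+(j:ℝ)-a)*(c+(j:ℝ)-b))/((c+(j:ℝ))*(c+(j:ℝ)-a-b)))
      atTop (𝓝 (Real.Gamma c * Real.Gamma (c-a-b) /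
        (Real.Gamma (c-a) * Real.Gamma (c-b)))) := by
  by_cases hz : Real.Gamma (c-a) * Real.Gamma (c-b) = 0
  · rw [hz, div_zero]
    obtain ⟨m, hm⟩ : ∃ m : ℕ, c - a = -(m:ℝ) ∨ c - b = -(m:ℝ) := by
      rcases mul_eq_zero.mp hz with h1 | h1
      · obtain ⟨m, hm⟩ := (Real.Gamma_eq_zero_iff _).mp h1
        exact ⟨m, Or.inl hm⟩
      · obtain ⟨m, hm⟩ := (Real.Gamma_eq_zero_iff _).mp h1
        exact ⟨m, Or.inr hm⟩
    refine Tendsto.congr' ?_ tendsto_const_nhds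
    filter_upwards [eventually_ge_atTop (m+1)] with n hn
    symm
    refine Finset.prod_eq_zero (Finset.mem_range.mpr (by omega : m < n)) ?_
    rcases hm with hm | hm
    · have h0 : c + (m:ℝ) - a = 0 := by linarith
      rw [h0, zero_mul, zero_div]
    · have h0 : c + (m:ℝ) - b = 0 := by linarith
      rw [h0, mul_zero, zero_div]
  · obtain ⟨ha0, hb0⟩ := mul_ne_zero_iff.mp hz
    have hja : ∀ j : ℕ, c - a + (j:ℝ) ≠ 0 := by
      intro j hj0
      exact ha0 ((Real.Gamma_eq_zero_iff _).mpr ⟨j, by linarith⟩)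
    have hjb : ∀ j : ℕ, c - b + (j:ℝ) ≠ 0 := by
      intro j hj0
      exact hb0 ((Real.Gamma_eq_zero_iff _).mpr ⟨j, by linarith⟩)
    have hjc : ∀ j : ℕ, c + (j:ℝ) ≠ 0 := fun j => by positivity
    have hjd : ∀ j : ℕ, c - a - b + (j:ℝ) ≠ 0 := by
      intro j
      have : (0:ℝ) ≤ (j:ℝ) := Nat.cast_nonneg j
      positivity
    have key : ∀ n : ℕ, 1 ≤ n →
        (∏ j ∈ Finset.range (n+1), ((c+(j:ℝ)-a)*(c+(j:ℝ)-b))/((c+(j:ℝ))*(c+(j:ℝ)-a-b)))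
        = Real.GammaSeq c n * Real.GammaSeq (c-a-b) n
          / (Real.GammaSeq (c-a) n * Real.GammaSeq (c-b) n) := by
      intro n hn
      have hn0 : (0:ℝ) < (n:ℝ) := by exact_mod_cast Nat.pos_of_ne_zero (by omega)
      have hfac : (0:ℝ) < (n.factorial : ℝ) := by positivity
      have hRa : ∏ j ∈ Finset.range (n+1), (c - a + (j:ℝ)) ≠ 0 :=
        Finset.prod_ne_zero_iff.mpr (fun j _ => hja j)
      have hRb : ∏ j ∈ Finset.range (n+1), (c - b + (j:ℝ)) ≠ 0 :=
        Finset.prod_ne_zero_iff.mpr (fun j _ => hjb j)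
      have hRc : ∏ j ∈ Finset.range (n+1), (c + (j:ℝ)) ≠ 0 :=
        Finset.prod_ne_zero_iff.mpr (fun j _ => hjc j)
      have hRd : ∏ j ∈ Finset.range (n+1), (c - a - b + (j:ℝ)) ≠ 0 :=
        Finset.prod_ne_zero_iff.mpr (fun j _ => hjd j)
      have hpow : (n:ℝ)^c * (n:ℝ)^(c-a-b) = (n:ℝ)^(c-a) * (n:ℝ)^(c-b) := by
        rw [← Real.rpow_add hn0, ← Real.rpow_add hn0]
        congr 1
        ring
      have step1 : (∏ j ∈ Finset.range (n+1),
          ((c+(j:ℝ)-a)*(c+(j:ℝ)-b))/((c+(j:ℝ))*(c+(j:ℝ)-a-b)))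
          = ((∏ j ∈ Finset.range (n+1), (c - a + (j:ℝ)))
              * ∏ j ∈ Finset.range (n+1), (c - b + (j:ℝ)))
            / ((∏ j ∈ Finset.range (n+1), (c + (j:ℝ)))
              * ∏ j ∈ Finset.range (n+1), (c - a - b + (j:ℝ))) := by
        rw [← Finset.prod_mul_distrib, ← Finset.prod_mul_distrib, ← Finset.prod_div_distrib]
        refine Finset.prod_congr rfl fun j _ => ?_
        ring_nf
      rw [step1]
      have hGa : Real.GammaSeq (c-a) n ≠ 0 := by
        simp only [Real.GammaSeq]
        exact div_ne_zero (mul_ne_zero (Real.rpow_pos_of_pos hn0 _).ne' hfac.ne') hRa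
      have hGb : Real.GammaSeq (c-b) n ≠ 0 := by
        simp only [Real.GammaSeq]
        exact div_ne_zero (mul_ne_zero (Real.rpow_pos_of_pos hn0 _).ne' hfac.ne') hRb
      rw [eq_comm, div_eq_div_iff (mul_ne_zero hGa hGb) (mul_ne_zero hRc hRd)]
      have e1 : Real.GammaSeq c n * Real.GammaSeq (c-a-b) n
          * ((∏ j ∈ Finset.range (n+1), (c + (j:ℝ)))
            * ∏ j ∈ Finset.range (n+1), (c - a - b + (j:ℝ)))
          = (n:ℝ)^c * (n:ℝ)^(c-a-b) * (n.factorial:ℝ)^2 := by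
        simp only [Real.GammaSeq]
        field_simp
      have e2 : ((∏ j ∈ Finset.range (n+1), (c - a + (j:ℝ)))
            * ∏ j ∈ Finset.range (n+1), (c - b + (j:ℝ)))
          * (Real.GammaSeq (c-a) n * Real.GammaSeq (c-b) n)
          = (n:ℝ)^(c-a) * (n:ℝ)^(c-b) * (n.factorial:ℝ)^2 := by
        simp only [Real.GammaSeq]
        field_simp
      rw [e1, e2]
      linear_combination ((n.factorial:ℝ)^2) * hpow
    have hGlim : Tendsto (fun n : ℕ => Real.GammaSeq c n * Real.GammaSeq (c-a-b) n
        / (Real.GammaSeq (c-a) n * Real.GammaSeq (c-b) n)) atTop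
        (𝓝 (Real.Gamma c * Real.Gamma (c-a-b) / (Real.Gamma (c-a) * Real.Gamma (c-b)))) :=
      ((Real.GammaSeq_tendsto_Gamma c).mul (Real.GammaSeq_tendsto_Gamma (c-a-b))).div
        ((Real.GammaSeq_tendsto_Gamma (c-a)).mul (Real.GammaSeq_tendsto_Gamma (c-b))) hz
    have hshift : Tendsto (fun n : ℕ => ∏ j ∈ Finset.range (n+1),
        ((c+(j:ℝ)-a)*(c+(j:ℝ)-b))/((c+(j:ℝ))*(c+(j:ℝ)-a-b))) atTop
        (𝓝 (Real.Gamma c * Real.Gamma (c-a-b) / (Real.Gamma (c-a) * Real.Gamma (c-b)))) := by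
      refine hGlim.congr' ?_
      filter_upwards [eventually_ge_atTop 1] with n hn
      exact (key n hn).symm
    exact (tendsto_add_atTop_iff_nat 1).mp hshift

/-- The Gauss (ordinary) hypergeometric function
`F(a,b;c;z) = ∑_{k≥0} ((a)_k (b)_k)/((c)_k k!) z^k`, with real parameters,
where `(q)_k` is the Pochhammer rising factorial. -/
noncomputable def hypergeom (a b c z : ℝ) : ℝ :=
  ∑' k : ℕ, ((ascPochhammer ℝ k).eval a * (ascPochhammer ℝ k).eval b) /
    ((ascPochhammer ℝ k).eval c * (Nat.factorial k : ℝ)) * z ^ k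

/-- Gauss summation theorem: if `a, b, c` are real with `c > 0` and `c − a − b > 0`,
then the hypergeometric series `∑_{k≥0} ((a)_k (b)_k)/((c)_k k!)` converges and
`F(a,b;c;1) = Γ(c)Γ(c−a−b)/(Γ(c−a)Γ(c−b))`. -/
theorem stmt_1 (a b c : ℝ) (hc : 0 < c) (h : 0 < c - a - b) :
    Summable (fun k : ℕ =>
      ((ascPochhammer ℝ k).eval a * (ascPochhammer ℝ k).eval b) /
        ((ascPochhammer ℝ k).eval c * (Nat.factorial k : ℝ)))
    ∧ hypergeom a b c 1 =
        Real.Gamma c * Real.Gamma (c - a - b) /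
          (Real.Gamma (c - a) * Real.Gamma (c - b)) := by
  have hsum : Summable (T a b c) := summable_T a b c hc h
  constructor
  · exact hsum
  · have h0 : hypergeom a b c 1 = ∑' k, T a b c k := by
      unfold hypergeom T
      simp
    rw [h0]
    have hconst : Tendsto (fun n : ℕ => ∑' k, T a b c k) atTop (𝓝 (∑' k, T a b c k)) :=
      tendsto_const_nhds
    have hmul : Tendsto (fun n : ℕ =>
        (∏ j ∈ Finset.range n, ((c+(j:ℝ)-a)*(c+(j:ℝ)-b))/((c+(j:ℝ))*(c+(j:ℝ)-a-b)))
          * ∑' k, T a b (c+(n:ℝ)) k) atTop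
        (𝓝 ((Real.Gamma c * Real.Gamma (c-a-b) / (Real.Gamma (c-a) * Real.Gamma (c-b))) * 1)) :=
      (prod_tendsto a b c hc h).mul (tendsto_F_one a b c hc h)
    have hcongr : Tendsto (fun n : ℕ => ∑' k, T a b c k) atTop
        (𝓝 ((Real.Gamma c * Real.Gamma (c-a-b) / (Real.Gamma (c-a) * Real.Gamma (c-b))) * 1)) := by
      refine hmul.congr fun n => ?_
      exact (iterate_step a b c hc h n).symm
    have := tendsto_nhds_unique hconst hcongr
    rw [this, mul_one]
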